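/- Let ν₀ be a probability measure on C(Ω;ℝ) and fix x₁,…,x_m ∈ Ω, y_j ∈ {±1}, with ν₀({u : u(x_j)=0 for some j}) = 0 and ν₀(B) > 0 for B = {u : y_j u(x_j) > 0 ∀j}. For γ > 0 let Φ_γ^p(u) = −Σ_j log Ψ(y_j u(x_j)/γ), with Ψ the standard normal CDF, and ν_γ^p(du) = (Z_γ^p)^{−1} e^{−Φ_γ^p(u)} ν₀(du). Then ν_γ^p converges weakly to ν(du) = ν₀(B)^{−1} 1_B(u) ν₀(du) as γ → 0. -/

import Mathlib

open MeasureTheory Filter Topology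

/-- The standard normal cumulative distribution function. -/
noncomputable def stdNormalCDF (v : ℝ) : ℝ :=
  (Real.sqrt (2 * Real.pi))⁻¹ * ∫ t in Set.Iic v, Real.exp (-t ^ 2 / 2)

lemma gauss_integrable : Integrable (fun t : ℝ => Real.exp (-t ^ 2 / 2)) := by
  have h := integrable_exp_neg_mul_sq (show (0:ℝ) < 1/2 by norm_num)
  exact h.congr (Eventually.of_forall fun t => by norm_num [neg_div]; ring_nf)

lemma gauss_integral_eq : (∫ t : ℝ, Real.exp (-t ^ 2 / 2)) = Real.sqrt (2 * Real.pi) := by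
  have h := integral_gaussian (1/2 : ℝ)
  rw [show Real.sqrt (Real.pi / (1/2)) = Real.sqrt (2 * Real.pi) by
    rw [show Real.pi / (1/2) = 2 * Real.pi by ring]] at h
  rw [← h]
  exact integral_congr_ae (Eventually.of_forall fun t => by norm_num [neg_div]; ring_nf)

lemma sqrt_two_pi_pos : 0 < Real.sqrt (2 * Real.pi) :=
  Real.sqrt_pos.2 (by positivity)

lemma stdNormalCDF_pos (v : ℝ) : 0 < stdNormalCDF v := by
  apply mul_pos (inv_pos.2 sqrt_two_pi_pos)
  rw [integral_pos_iff_support_of_nonneg_ae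
    (Eventually.of_forall fun t => (Real.exp_pos _).le) gauss_integrable.integrableOn]
  have hs : Function.support (fun t : ℝ => Real.exp (-t ^ 2 / 2)) = Set.univ := by
    ext t; simp [Function.mem_support, (Real.exp_pos _).ne']
  rw [hs, Measure.restrict_apply_univ, Real.volume_Iic]
  simp

lemma stdNormalCDF_le_one (v : ℝ) : stdNormalCDF v ≤ 1 := by
  rw [stdNormalCDF, inv_mul_le_iff₀ sqrt_two_pi_pos, mul_one, ← gauss_integral_eq]
  exact setIntegral_le_integral gauss_integrable
    (Eventually.of_forall fun t => (Real.exp_pos _).le)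

lemma stdNormalCDF_tendsto_atTop : Tendsto stdNormalCDF atTop (𝓝 1) := by
  have h : Tendsto (fun v : ℝ => ∫ t in Set.Iic v, Real.exp (-t ^ 2 / 2)) atTop
      (𝓝 (∫ t : ℝ, Real.exp (-t ^ 2 / 2))) :=
    (MeasureTheory.aecover_Iic tendsto_id).integral_tendsto_of_countably_generated
      gauss_integrable
  have h2 := h.const_mul (Real.sqrt (2 * Real.pi))⁻¹
  rw [gauss_integral_eq, inv_mul_cancel₀ sqrt_two_pi_pos.ne'] at h2
  exact h2

lemma stdNormalCDF_tendsto_atBot : Tendsto stdNormalCDF atBot (𝓝 0) := by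
  have h : Tendsto (fun v : ℝ => ∫ t in Set.Ioi v, Real.exp (-t ^ 2 / 2)) atBot
      (𝓝 (∫ t : ℝ, Real.exp (-t ^ 2 / 2))) :=
    (MeasureTheory.aecover_Ioi tendsto_id).integral_tendsto_of_countably_generated
      gauss_integrable
  have heq : ∀ v : ℝ, (∫ t in Set.Iic v, Real.exp (-t ^ 2 / 2))
      = (∫ t : ℝ, Real.exp (-t ^ 2 / 2)) - ∫ t in Set.Ioi v, Real.exp (-t ^ 2 / 2) := by
    intro v
    rw [← integral_add_compl (measurableSet_Iic : MeasurableSet (Set.Iic v)) gauss_integrable,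
      Set.compl_Iic]
    ring
  have h2 : Tendsto (fun v : ℝ => ∫ t in Set.Iic v, Real.exp (-t ^ 2 / 2)) atBot (𝓝 0) := by
    have h3 := (tendsto_const_nhds (x := ∫ t : ℝ, Real.exp (-t ^ 2 / 2))
      (f := atBot (α := ℝ))).sub h
    rw [sub_self] at h3
    simp_rw [heq]
    exact h3
  have h4 := h2.const_mul (Real.sqrt (2 * Real.pi))⁻¹
  rw [mul_zero] at h4
  exact h4

lemma stdNormalCDF_monotone : Monotone stdNormalCDF := by
  intro a b hab
  apply mul_le_mul_of_nonneg_left _ (inv_pos.2 sqrt_two_pi_pos).le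
  exact setIntegral_mono_set gauss_integrable.integrableOn
    (Eventually.of_forall fun t => (Real.exp_pos _).le)
    (HasSubset.Subset.eventuallyLE (Set.Iic_subset_Iic.2 hab))

lemma stdNormalCDF_measurable : Measurable stdNormalCDF :=
  stdNormalCDF_monotone.measurable

/-- The probit misfit `Φ_γ^p(u) = −∑_j log Ψ(y_j u(x_j)/γ)`. -/
noncomputable def probitMisfit {Ω : Type*} [TopologicalSpace Ω]
    {m : ℕ} (x : Fin m → Ω) (y : Fin m → ℝ) (γ : ℝ) (u : C(Ω, ℝ)) : ℝ :=
  -∑ j, Real.log (stdNormalCDF (y j * u (x j) / γ))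

/-- Small noise limit of the probit posterior: `ν_γ^p ⇒ ν₀(·|B)` as `γ → 0⁺`,
where `B = {u : y_j u(x_j) > 0 ∀ j}`. Weak convergence is expressed as convergence of
integrals of all bounded continuous functionals. -/
theorem probit_small_noise_limit
    {Ω : Type*} [TopologicalSpace Ω]
    [MeasurableSpace C(Ω, ℝ)] [BorelSpace C(Ω, ℝ)]
    (ν₀ : Measure C(Ω, ℝ)) [IsProbabilityMeasure ν₀]
    (m : ℕ) (x : Fin m → Ω) (y : Fin m → ℝ)
    (hy : ∀ j, y j = 1 ∨ y j = -1)
    (hzero : ν₀ {u : C(Ω, ℝ) | ∃ j, u (x j) = 0} = 0)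
    (B : Set C(Ω, ℝ)) (hB : B = {u : C(Ω, ℝ) | ∀ j, y j * u (x j) > 0})
    (hBpos : 0 < ν₀ B)
    (νγ : ℝ → Measure C(Ω, ℝ))
    (hνγ : ∀ γ : ℝ, 0 < γ →
      νγ γ = (ENNReal.ofReal (∫ u, Real.exp (-(probitMisfit x y γ u)) ∂ν₀))⁻¹ •
        ν₀.withDensity (fun u => ENNReal.ofReal (Real.exp (-(probitMisfit x y γ u)))))
    (ν : Measure C(Ω, ℝ)) (hν : ν = (ν₀ B)⁻¹ • ν₀.restrict B) :
    ∀ g : C(Ω, ℝ) → ℝ, Continuous g → (∃ M, ∀ u, |g u| ≤ M) →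
      Tendsto (fun γ => ∫ u, g u ∂(νγ γ)) (nhdsWithin 0 (Set.Ioi 0))
        (𝓝 (∫ u, g u ∂ν)) := by
  rintro g hg ⟨M, hM⟩
  set F : ℝ → C(Ω, ℝ) → ℝ := fun γ u => Real.exp (-(probitMisfit x y γ u)) with hF
  have hFprod : ∀ γ u, F γ u = ∏ j, stdNormalCDF (y j * u (x j) / γ) := by
    intro γ u
    simp only [hF, probitMisfit, neg_neg, Real.exp_sum]
    exact Finset.prod_congr rfl fun j _ => Real.exp_log (stdNormalCDF_pos _)
  have hF0 : ∀ γ u, 0 ≤ F γ u := fun γ u => (Real.exp_pos _).le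
  have hF1 : ∀ γ u, F γ u ≤ 1 := by
    intro γ u
    rw [hFprod]
    exact Finset.prod_le_one (fun j _ => (stdNormalCDF_pos _).le)
      (fun j _ => stdNormalCDF_le_one _)
  have hFmeas : ∀ γ, Measurable (F γ) := by
    intro γ
    have h1 : (F γ) = fun u => ∏ j, stdNormalCDF (y j * u (x j) / γ) := funext (hFprod γ)
    rw [h1]
    exact Finset.measurable_prod _ fun j _ => stdNormalCDF_measurable.comp
      (((continuous_const.mul (continuous_eval_const (x j))).div_const γ).measurable)
  have mB : MeasurableSet B := by
    rw [hB, show {u : C(Ω,ℝ) | ∀ j, y j * u (x j) > 0} = ⋂ j, {u | 0 < y j * u (x j)} by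
      ext u; simp]
    exact MeasurableSet.iInter fun j =>
      measurableSet_lt measurable_const
        ((continuous_const.mul (continuous_eval_const (x j))).measurable)
  have hyne : ∀ j, y j ≠ 0 := fun j => by rcases hy j with h | h <;> rw [h] <;> norm_num
  have hae : ∀ᵐ u ∂ν₀, ∀ j, y j * u (x j) ≠ 0 := by
    rw [ae_iff]
    refine measure_mono_null ?_ hzero
    intro u hu
    simp only [Set.mem_setOf_eq, not_forall, not_not] at hu
    obtain ⟨j, hj⟩ := hu
    exact ⟨j, (mul_eq_zero.1 hj).resolve_left (hyne j)⟩
  have hlim : ∀ᵐ u ∂ν₀, Tendsto (fun γ => F γ u) (nhdsWithin 0 (Set.Ioi 0))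
      (𝓝 (B.indicator (1 : C(Ω, ℝ) → ℝ) u)) := by
    filter_upwards [hae] with u hu
    have hfac : ∀ j, Tendsto (fun γ => stdNormalCDF (y j * u (x j) / γ))
        (nhdsWithin 0 (Set.Ioi 0)) (𝓝 (if 0 < y j * u (x j) then (1:ℝ) else 0)) := by
      intro j
      rcases (hu j).lt_or_gt with hneg | hpos
      · rw [if_neg (not_lt.2 hneg.le)]
        have h : Tendsto (fun γ : ℝ => y j * u (x j) / γ) (nhdsWithin 0 (Set.Ioi 0)) atBot := by
          simp_rw [div_eq_mul_inv]
          exact tendsto_inv_nhdsGT_zero.const_mul_atTop_of_neg hneg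
        exact stdNormalCDF_tendsto_atBot.comp h
      · rw [if_pos hpos]
        have h : Tendsto (fun γ : ℝ => y j * u (x j) / γ) (nhdsWithin 0 (Set.Ioi 0)) atTop := by
          simp_rw [div_eq_mul_inv]
          exact tendsto_inv_nhdsGT_zero.const_mul_atTop hpos
        exact stdNormalCDF_tendsto_atTop.comp h
    have hprod := tendsto_finset_prod (Finset.univ) (fun j (_ : j ∈ Finset.univ) => hfac j)
    have hind : (B.indicator (1 : C(Ω, ℝ) → ℝ) u)
        = ∏ j, (if 0 < y j * u (x j) then (1:ℝ) else 0) := by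
      by_cases hB' : u ∈ B
      · rw [Set.indicator_of_mem hB', Pi.one_apply]
        rw [hB] at hB'
        refine (Finset.prod_eq_one fun j _ => ?_).symm
        exact if_pos (hB' j)
      · rw [Set.indicator_of_notMem hB']
        rw [hB] at hB'
        simp only [Set.mem_setOf_eq, not_forall] at hB'
        obtain ⟨j, hj⟩ := hB'
        refine (Finset.prod_eq_zero (Finset.mem_univ j) ?_).symm
        exact if_neg hj
    rw [hind]
    refine hprod.congr fun γ => (hFprod γ u).symm
  -- convergence of the normalising constant
  have hZ : Tendsto (fun γ => ∫ u, F γ u ∂ν₀) (nhdsWithin 0 (Set.Ioi 0))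
      (𝓝 ((ν₀ B).toReal)) := by
    have := tendsto_integral_filter_of_dominated_convergence (μ := ν₀)
      (bound := fun _ => (1:ℝ))
      (Eventually.of_forall fun γ => (hFmeas γ).aestronglyMeasurable)
      (Eventually.of_forall fun γ => Eventually.of_forall fun u => by
        rw [Real.norm_eq_abs, abs_of_nonneg (hF0 γ u)]; exact hF1 γ u)
      (integrable_const 1) hlim
    rwa [MeasureTheory.integral_indicator_one mB] at this
  -- convergence of the numerator
  have hL : Tendsto (fun γ => ∫ u, F γ u * g u ∂ν₀) (nhdsWithin 0 (Set.Ioi 0))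
      (𝓝 (∫ u in B, g u ∂ν₀)) := by
    have hlim' : ∀ᵐ u ∂ν₀, Tendsto (fun γ => F γ u * g u) (nhdsWithin 0 (Set.Ioi 0))
        (𝓝 (B.indicator g u)) := by
      filter_upwards [hlim] with u hu
      have := hu.mul_const (g u)
      have heq : B.indicator (1 : C(Ω, ℝ) → ℝ) u * g u = B.indicator g u := by
        by_cases h : u ∈ B <;> simp [h]
      rwa [heq] at this
    have := tendsto_integral_filter_of_dominated_convergence (μ := ν₀)
      (bound := fun _ => M)
      (Eventually.of_forall fun γ => ((hFmeas γ).mul hg.measurable).aestronglyMeasurable)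
      (Eventually.of_forall fun γ => Eventually.of_forall fun u => by
        rw [Real.norm_eq_abs, Pi.mul_apply, abs_mul, abs_of_nonneg (hF0 γ u)]
        calc F γ u * |g u| ≤ 1 * M := by
              exact mul_le_mul (hF1 γ u) (hM u) (abs_nonneg _) zero_le_one
          _ = M := one_mul M)
      (integrable_const M) hlim'
    rwa [MeasureTheory.integral_indicator mB] at this
  have hbne : (ν₀ B).toReal ≠ 0 :=
    ENNReal.toReal_ne_zero.2 ⟨hBpos.ne', measure_ne_top ν₀ B⟩
  have hmain := (hZ.inv₀ hbne).mul hL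
  have hRHS : (∫ u, g u ∂ν) = ((ν₀ B).toReal)⁻¹ * ∫ u in B, g u ∂ν₀ := by
    rw [hν, integral_smul_measure, smul_eq_mul, ENNReal.toReal_inv]
  rw [hRHS]
  refine Tendsto.congr' ?_ hmain
  filter_upwards [self_mem_nhdsWithin] with γ (hγ : γ ∈ Set.Ioi 0)
  have hγ0 : (0:ℝ) < γ := hγ
  rw [hνγ γ hγ0, integral_smul_measure, smul_eq_mul]
  have hwd : ∫ u, g u ∂(ν₀.withDensity fun u => ENNReal.ofReal (F γ u))
      = ∫ u, F γ u * g u ∂ν₀ := by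
    rw [show (fun u => ENNReal.ofReal (F γ u))
        = (fun u => ((F γ u).toNNReal : ENNReal)) from rfl]
    rw [integral_withDensity_eq_integral_smul (hFmeas γ).real_toNNReal]
    exact integral_congr_ae (Eventually.of_forall fun u => by
      simp [NNReal.smul_def, Real.coe_toNNReal _ (hF0 γ u)])
  rw [hwd, ENNReal.toReal_inv, ENNReal.toReal_ofReal (integral_nonneg (hF0 γ))]
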